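/- The polynomial f_2(x,t) = x^6 + (3t^2 + 25/3)x^4 + (3t^4 + 30t^2 - 125/9)x^2 + t^6 + (17/3)t^4 + (475/9)t^2 + 625/9 satisfies the bilinear Boussinesq equation F·F_tt - F_t^2 + F·F_xx - F_x^2 - (1/3)(F·F_xxxx - 4 F_x F_xxx + 3 F_xx^2) = 0. -/

import Mathlib

open Real

noncomputable def px (f : ℝ → ℝ → ℝ) : ℝ → ℝ → ℝ := fun x t => deriv (fun y => f y t) x
noncomputable def pt (f : ℝ → ℝ → ℝ) : ℝ → ℝ → ℝ := fun x t => deriv (fun s => f x s) t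

noncomputable def f₂ : ℝ → ℝ → ℝ := fun x t =>
  x^6 + (3*t^2 + 25/3)*x^4 + (3*t^4 + 30*t^2 - 125/9)*x^2
    + t^6 + (17/3)*t^4 + (475/9)*t^2 + 625/9

lemma hd6 (a b c : ℝ) (x : ℝ) :
    HasDerivAt (fun y : ℝ => y^6 + a*y^4 + b*y^2 + c)
      (6*x^5 + 4*a*x^3 + 2*b*x) x := by
  have h := (((hasDerivAt_pow 6 x).add
      ((hasDerivAt_pow 4 x).const_mul a)).add
      ((hasDerivAt_pow 2 x).const_mul b)).add_const c
  exact h.congr_deriv (by push_cast; ring)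

lemma hd5 (a b : ℝ) (x : ℝ) :
    HasDerivAt (fun y : ℝ => 6*y^5 + a*y^3 + b*y)
      (30*x^4 + 3*a*x^2 + b) x := by
  have h := (((hasDerivAt_pow 5 x).const_mul 6).add
      ((hasDerivAt_pow 3 x).const_mul a)).add
      ((hasDerivAt_id x).const_mul b)
  exact h.congr_deriv (by push_cast; ring)

lemma hd4 (a b : ℝ) (x : ℝ) :
    HasDerivAt (fun y : ℝ => 30*y^4 + a*y^2 + b)
      (120*x^3 + 2*a*x) x := by
  have h := (((hasDerivAt_pow 4 x).const_mul 30).add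
      ((hasDerivAt_pow 2 x).const_mul a)).add_const b
  exact h.congr_deriv (by push_cast; ring)

lemma hd3 (a : ℝ) (x : ℝ) :
    HasDerivAt (fun y : ℝ => 120*y^3 + a*y) (360*x^2 + a) x := by
  have h := ((hasDerivAt_pow 3 x).const_mul 120).add ((hasDerivAt_id x).const_mul a)
  exact h.congr_deriv (by push_cast; ring)

lemma hfx : px f₂ = fun x t =>
    6*x^5 + 4*(3*t^2 + 25/3)*x^3 + 2*(3*t^4 + 30*t^2 - 125/9)*x := by
  funext x t
  have h : (fun y => f₂ y t) = fun y : ℝ =>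
      y^6 + (3*t^2 + 25/3)*y^4 + (3*t^4 + 30*t^2 - 125/9)*y^2
        + (t^6 + (17/3)*t^4 + (475/9)*t^2 + 625/9) := by
    funext y; simp only [f₂]; ring
  simp only [px, h]
  exact (hd6 _ _ _ x).deriv

lemma hfxx : px (px f₂) = fun x t =>
    30*x^4 + 3*(4*(3*t^2 + 25/3))*x^2 + 2*(3*t^4 + 30*t^2 - 125/9) := by
  funext x t
  have h : (fun y => px f₂ y t) = fun y : ℝ =>
      6*y^5 + (4*(3*t^2 + 25/3))*y^3 + (2*(3*t^4 + 30*t^2 - 125/9))*y := by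
    funext y; rw [hfx]
  show deriv (fun y => px f₂ y t) x = _
  rw [h]; exact (hd5 _ _ x).deriv

lemma hfxxx : px (px (px f₂)) = fun x t =>
    120*x^3 + 2*(3*(4*(3*t^2 + 25/3)))*x := by
  funext x t
  have h : (fun y => px (px f₂) y t) = fun y : ℝ =>
      30*y^4 + (3*(4*(3*t^2 + 25/3)))*y^2 + (2*(3*t^4 + 30*t^2 - 125/9)) := by
    funext y; rw [hfxx]
  show deriv (fun y => px (px f₂) y t) x = _
  rw [h]; exact (hd4 _ _ x).deriv

lemma hfxxxx : px (px (px (px f₂))) = fun x t =>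
    360*x^2 + 2*(3*(4*(3*t^2 + 25/3))) := by
  funext x t
  have h : (fun y => px (px (px f₂)) y t) = fun y : ℝ =>
      120*y^3 + (2*(3*(4*(3*t^2 + 25/3))))*y := by
    funext y; rw [hfxxx]
  show deriv (fun y => px (px (px f₂)) y t) x = _
  rw [h]; exact (hd3 _ x).deriv

lemma hft : pt f₂ = fun x t =>
    6*t^5 + 4*(3*x^2 + 17/3)*t^3 + 2*(3*x^4 + 30*x^2 + 475/9)*t := by
  funext x t
  have h : (fun s => f₂ x s) = fun s : ℝ =>
      s^6 + (3*x^2 + 17/3)*s^4 + (3*x^4 + 30*x^2 + 475/9)*s^2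
        + (x^6 + (25/3)*x^4 - (125/9)*x^2 + 625/9) := by
    funext s; simp only [f₂]; ring
  simp only [pt, h]
  exact (hd6 _ _ _ t).deriv

lemma hftt : pt (pt f₂) = fun x t =>
    30*t^4 + 3*(4*(3*x^2 + 17/3))*t^2 + 2*(3*x^4 + 30*x^2 + 475/9) := by
  funext x t
  have h : (fun s => pt f₂ x s) = fun s : ℝ =>
      6*s^5 + (4*(3*x^2 + 17/3))*s^3 + (2*(3*x^4 + 30*x^2 + 475/9))*s := by
    funext s; rw [hft]
  show deriv (fun s => pt f₂ x s) t = _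
  rw [h]; exact (hd5 _ _ t).deriv

theorem stmt3 : ∀ x t : ℝ,
    f₂ x t * pt (pt f₂) x t - (pt f₂ x t)^2 + f₂ x t * px (px f₂) x t - (px f₂ x t)^2
      - (1/3) * (f₂ x t * px (px (px (px f₂))) x t
          - 4 * px f₂ x t * px (px (px f₂)) x t + 3 * (px (px f₂) x t)^2) = 0 := by
  intro x t
  rw [hfxxxx, hfxxx, hfxx, hfx, hftt, hft]
  simp only [f₂]
  ring
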